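/- The multiplication operator M_{e_k} by e_k(z) = z^k/√ω_k is expansive on H²_ω (i.e., ‖e_k f‖ ≥ ‖f‖ for all f ∈ H²_ω with e_k f ∈ H²_ω) if and only if ω_{n+k} ≥ ω_n · ω_k for all integers n ≥ 0. -/
import Mathlib


noncomputable section
open Complex Filter

namespace WHS

/-- Membership in the weighted Hardy space: the coefficient sequence `a` satisfies
`∑ ω n * |a n|^2 < ∞`. -/
def memH (ω : ℕ → ℝ) (a : ℕ → ℂ) : Prop :=
  Summable fun n => ω n * ‖a n‖ ^ 2

/-- The squared norm `‖f‖²` in the weighted Hardy space. -/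
def wNorm2 (ω : ℕ → ℝ) (a : ℕ → ℂ) : ℝ := ∑' n, ω n * ‖a n‖ ^ 2

/-- The inner product `⟨f, g⟩ = ∑ ω n * a n * conj (b n)` (linear in the first argument). -/
def wInner (ω : ℕ → ℝ) (a b : ℕ → ℂ) : ℂ :=
  ∑' n, (ω n : ℂ) * a n * (starRingEnd ℂ) (b n)

/-- Coefficients of `z^m * f`. -/
def shift (m : ℕ) (a : ℕ → ℂ) : ℕ → ℂ := fun n => if m ≤ n then a (n - m) else 0

/-- Coefficients of `p * f` for a polynomial `p`. -/
def polyMul (p : Polynomial ℂ) (a : ℕ → ℂ) : ℕ → ℂ :=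
  fun n => ∑ j ∈ Finset.range (n + 1), p.coeff j * a (n - j)

/-- Coefficients of the product of power series with coefficients `b` and `a`. -/
def conv (b a : ℕ → ℂ) : ℕ → ℂ :=
  fun n => ∑ j ∈ Finset.range (n + 1), b j * a (n - j)

/-- `f` is an `H²_ω`-inner function: `f ∈ H²_ω`, `‖f‖ = 1` and `⟨z^m f, f⟩ = 0` for all `m ≥ 1`. -/
def IsInner (ω : ℕ → ℝ) (a : ℕ → ℂ) : Prop :=
  memH ω a ∧ wNorm2 ω a = 1 ∧ ∀ m : ℕ, 1 ≤ m → wInner ω (shift m a) a = 0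

end WHS



private lemma stmt4_inj (k : ℕ) : Function.Injective (fun n : ℕ => n + k) :=
  add_left_injective k

private lemma stmt4_sq (x : ℝ) (hx : 0 < x) (z : ℂ) :
    ‖((Real.sqrt x : ℂ))⁻¹ * z‖ ^ 2 = x⁻¹ * ‖z‖ ^ 2 := by
  rw [norm_mul, norm_inv, Complex.norm_real, mul_pow, inv_pow, Real.norm_eq_abs,
    _root_.abs_of_nonneg (Real.sqrt_nonneg x), Real.sq_sqrt hx.le]

private lemma stmt4_range (ω : ℕ → ℝ) (k : ℕ) (a : ℕ → ℂ) :
    ∀ x ∉ Set.range (fun n : ℕ => n + k),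
      ω x * ‖((Real.sqrt (ω k) : ℂ))⁻¹ * WHS.shift k a x‖ ^ 2 = 0 := by
  intro x hx
  have hxk : ¬ k ≤ x := fun h => hx ⟨x - k, show x - k + k = x by omega⟩
  simp [WHS.shift, hxk]

private lemma stmt4_comp (ω : ℕ → ℝ) (hpos : ∀ n, 0 < ω n) (k : ℕ) (a : ℕ → ℂ) (n : ℕ) :
    ω (n + k) * ‖((Real.sqrt (ω k) : ℂ))⁻¹ * WHS.shift k a (n + k)‖ ^ 2
      = ω (n + k) * ((ω k)⁻¹ * ‖a n‖ ^ 2) := by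
  have hkn : k ≤ n + k := Nat.le_add_left _ _
  rw [stmt4_sq (ω k) (hpos k)]
  simp [WHS.shift, hkn]

private lemma stmt4_val (ω : ℕ → ℝ) (hpos : ∀ n, 0 < ω n) (k : ℕ) (a : ℕ → ℂ) :
    WHS.wNorm2 ω (fun n => ((Real.sqrt (ω k) : ℂ))⁻¹ * WHS.shift k a n)
      = ∑' n, ω (n + k) * ((ω k)⁻¹ * ‖a n‖ ^ 2) := by
  rw [WHS.wNorm2,
    ← (stmt4_inj k).tsum_eq (Function.support_subset_iff'.mpr (stmt4_range ω k a))]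
  exact tsum_congr fun n => stmt4_comp ω hpos k a n

private lemma stmt4_summable (ω : ℕ → ℝ) (hpos : ∀ n, 0 < ω n) (k : ℕ) (a : ℕ → ℂ)
    (hb : WHS.memH ω (fun n => ((Real.sqrt (ω k) : ℂ))⁻¹ * WHS.shift k a n)) :
    Summable (fun n => ω (n + k) * ((ω k)⁻¹ * ‖a n‖ ^ 2)) := by
  have h := hb.comp_injective (stmt4_inj k)
  have he : ((fun n => ω n *
      ‖((Real.sqrt (ω k) : ℂ))⁻¹ * WHS.shift k a n‖ ^ 2) ∘ fun n : ℕ => n + k)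
      = fun n => ω (n + k) * ((ω k)⁻¹ * ‖a n‖ ^ 2) :=
    funext fun n => stmt4_comp ω hpos k a n
  rwa [he] at h

/-- multiplication by `e_k(z) = z^k/√(ω k)` is expansive on `H²_ω`
iff `ω (n+k) ≥ ω n * ω k` for all `n ≥ 0`. -/
theorem stmt4 (ω : ℕ → ℝ) (hpos : ∀ n, 0 < ω n) (hω0 : ω 0 = 1)
    (hlim : Filter.Tendsto (fun n => ω (n + 1) / ω n) Filter.atTop (nhds 1))
    (k : ℕ) (hk : 1 ≤ k) :
    (∀ a : ℕ → ℂ, WHS.memH ω a →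
        WHS.memH ω (fun n => ((Real.sqrt (ω k) : ℂ))⁻¹ * WHS.shift k a n) →
        WHS.wNorm2 ω a ≤ WHS.wNorm2 ω (fun n => ((Real.sqrt (ω k) : ℂ))⁻¹ * WHS.shift k a n)) ↔
      ∀ n : ℕ, ω n * ω k ≤ ω (n + k) := by
  constructor
  · intro H n
    set a : ℕ → ℂ := fun m => if m = n then 1 else 0 with ha_def
    have ha : WHS.memH ω a := by
      apply summable_of_ne_finset_zero (s := {n})
      intro m hm
      have : m ≠ n := by simpa using hm
      simp [a, this]
    have hzero : ∀ m, m ≠ n + k → WHS.shift k a m = 0 := by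
      intro m hm
      by_cases hkm : k ≤ m
      · have : m - k ≠ n := by omega
        simp [WHS.shift, hkm, a, this]
      · simp [WHS.shift, hkm]
    have hb : WHS.memH ω (fun m => ((Real.sqrt (ω k) : ℂ))⁻¹ * WHS.shift k a m) := by
      apply summable_of_ne_finset_zero (s := {n + k})
      intro m hm
      have : m ≠ n + k := by simpa using hm
      simp [hzero m this]
    have hle := H a ha hb
    rw [stmt4_val ω hpos k a] at hle
    have h1 : WHS.wNorm2 ω a = ω n := by
      rw [WHS.wNorm2, tsum_eq_single n (fun m hm => by simp [a, hm])]
      simp [a]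
    have h2 : (∑' m, ω (m + k) * ((ω k)⁻¹ * ‖a m‖ ^ 2)) = ω (n + k) * (ω k)⁻¹ := by
      rw [tsum_eq_single n (fun m hm => by simp [a, hm])]
      simp [a, mul_assoc]
    rw [h1, h2] at hle
    rw [← div_eq_mul_inv] at hle
    exact (le_div_iff₀ (hpos k)).mp hle
  · intro H a ha hb
    rw [stmt4_val ω hpos k a, WHS.wNorm2]
    refine Summable.tsum_le_tsum (fun n => ?_) ha (stmt4_summable ω hpos k a hb)
    have h1 : ω n ≤ ω (n + k) * (ω k)⁻¹ := by
      rw [← div_eq_mul_inv]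
      exact (le_div_iff₀ (hpos k)).mpr (H n)
    calc ω n * ‖a n‖ ^ 2 ≤ (ω (n + k) * (ω k)⁻¹) * ‖a n‖ ^ 2 :=
          mul_le_mul_of_nonneg_right h1 (sq_nonneg _)
      _ = ω (n + k) * ((ω k)⁻¹ * ‖a n‖ ^ 2) := by ring
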